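/- For all integers k ≥ 2 and r ≥ 2, any two vertices of the Andrásfai graph A_{k,r} lie on a common cycle of length 2k+1. -/

import Mathlib

/-- The generalised Andrásfai graph `A_{k,r}`. -/
def andrasfai (k r : ℕ) : SimpleGraph (Fin ((2*k-1)*(r-1)+2)) :=
  SimpleGraph.fromRel fun i j =>
    (((k : ℚ) - 1) / (2 * k - 1) <
        (min (((i.val : ℤ) - (j.val : ℤ)).natAbs)
            ((2*k-1)*(r-1)+2 - ((i.val : ℤ) - (j.val : ℤ)).natAbs) : ℚ) /
          ((2*k-1)*(r-1)+2)) ∧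
    ((min (((i.val : ℤ) - (j.val : ℤ)).natAbs)
            ((2*k-1)*(r-1)+2 - ((i.val : ℤ) - (j.val : ℤ)).natAbs) : ℚ) /
          ((2*k-1)*(r-1)+2) < (k : ℚ) / (2 * k - 1))

open SimpleGraph

private def chainWalk {V : Type*} {G : SimpleGraph V} (f : ℕ → V)
    (h : ∀ i, G.Adj (f i) (f (i+1))) : (s m : ℕ) → G.Walk (f s) (f (s + m))
  | _, 0 => Walk.nil
  | s, m+1 => (Walk.cons (h s) (chainWalk f h (s+1) m)).copy rfl (congrArg f (by omega))

private lemma chainWalk_length {V : Type*} {G : SimpleGraph V} (f : ℕ → V)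
    (h : ∀ i, G.Adj (f i) (f (i+1))) : ∀ s m, (chainWalk f h s m).length = m
  | _, 0 => rfl
  | s, m+1 => by
    simp [chainWalk, chainWalk_length f h (s+1) m]

private lemma chainWalk_support {V : Type*} {G : SimpleGraph V} (f : ℕ → V)
    (h : ∀ i, G.Adj (f i) (f (i+1))) : ∀ s m,
    (chainWalk f h s m).support = (List.range (m+1)).map (fun t => f (s + t))
  | s, 0 => by simp [chainWalk, List.range_succ]
  | s, m+1 => by
    rw [chainWalk, Walk.support_copy, Walk.support_cons, chainWalk_support f h (s+1) m]
    conv_rhs => rw [List.range_succ_eq_map]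
    simp only [List.map_cons, List.map_map, Nat.add_zero]
    congr 1
    apply List.map_congr_left
    intro t _
    simp only [Function.comp_apply]
    exact congrArg f (by omega)

private lemma chainWalk_edges {V : Type*} {G : SimpleGraph V} (f : ℕ → V)
    (h : ∀ i, G.Adj (f i) (f (i+1))) : ∀ s m,
    (chainWalk f h s m).edges = (List.range m).map (fun t => s(f (s + t), f (s + t + 1)))
  | s, 0 => by simp [chainWalk]
  | s, m+1 => by
    rw [chainWalk, Walk.edges_copy, Walk.edges_cons, chainWalk_edges f h (s+1) m]
    conv_rhs => rw [List.range_succ_eq_map]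
    simp only [List.map_cons, List.map_map, Nat.add_zero]
    congr 1
    apply List.map_congr_left
    intro t _
    simp only [Function.comp_apply]
    have h1 : s + 1 + t = s + Nat.succ t := by omega
    rw [h1]

private lemma andrasfai_adj_of_step (K R : ℕ)
    (x y : Fin ((2*(K+2)-1)*((R+2)-1)+2)) (c : ℕ)
    (hc1 : ((K+2)-1)*((R+2)-1)+1 ≤ c) (hc2 : c ≤ (K+2)*((R+2)-1)+1)
    (hy : (x.val + c) % ((2*(K+2)-1)*((R+2)-1)+2) = y.val) :
    (andrasfai (K+2) (R+2)).Adj x y := by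
  have hsub1 : 2*(K+2)-1 = 2*K+3 := by omega
  have hsub2 : (R+2)-1 = R+1 := by omega
  have hsub3 : (K+2)-1 = K+1 := by omega
  set N : ℕ := (2*K+3)*(R+1)+2 with hNdef
  have hnred : (2*(K+2)-1)*((R+2)-1)+2 = N := by rw [hNdef, hsub1, hsub2]
  rw [hsub3, hsub2] at hc1
  rw [hsub2] at hc2
  set A := (K+1)*(R+1) with hAdef
  set B := (K+2)*(R+1) with hBdef
  have hnAB : N = A + B + 2 := by rw [hNdef, hAdef, hBdef]; ring
  have hy' : (x.val + c) % N = y.val := by rw [← hnred]; exact hy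
  have hA1 : 1 ≤ A := by
    rw [hAdef]; exact Nat.one_le_iff_ne_zero.mpr (Nat.mul_ne_zero (by omega) (by omega))
  have hid1 : (A+1)*(2*K+3) = (K+1)*N + 1 := by rw [hNdef, hAdef]; ring
  have hid2 : (B+1)*(2*K+3) + 1 = (K+2)*N := by rw [hNdef, hBdef]; ring
  clear_value N A B
  have hxn : x.val < N := by have := x.isLt; omega
  have hyn : y.val < N := by have := y.isLt; omega
  set D := ((x.val : ℤ) - (y.val : ℤ)).natAbs with hDdef
  have hD : D = c ∨ D = N - c := by
    rcases Nat.lt_or_ge (x.val + c) N with h | h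
    · left
      have hyx : y.val = x.val + c := by rw [← hy', Nat.mod_eq_of_lt h]
      omega
    · right
      have hyx : y.val = x.val + c - N := by
        rw [← hy', Nat.mod_eq_sub_mod h, Nat.mod_eq_of_lt (by omega)]
      omega
  have hDn : D ≤ N := by omega
  have haM : A+1 ≤ min D (N - D) := by omega
  have hbM : min D (N - D) ≤ B+1 := by omega
  have h1 : (K+1)*N < (min D (N - D))*(2*K+3) := by
    have := Nat.mul_le_mul_right (2*K+3) haM
    omega
  have h2 : (min D (N - D))*(2*K+3) < (K+2)*N := by
    have := Nat.mul_le_mul_right (2*K+3) hbM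
    omega
  have hq1 : ((K:ℚ)+1) * N < ((min D (N - D) : ℕ) : ℚ) * (2*K+3) := by exact_mod_cast h1
  have hq2 : ((min D (N - D) : ℕ) : ℚ) * (2*K+3) < ((K:ℚ)+2) * N := by exact_mod_cast h2
  have hNq : (0:ℚ) < (N:ℚ) := by exact_mod_cast Nat.pos_of_ne_zero (by omega)
  have hKq : (0:ℚ) < 2 * ((K+2:ℕ):ℚ) - 1 := by push_cast; linarith [Nat.cast_nonneg (α := ℚ) K]
  have hxyne : x.val ≠ y.val := by omega
  simp only [andrasfai, SimpleGraph.fromRel_adj]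
  have hrwn : (2 * ((K+2:ℕ):ℚ) - 1) * (((R+2:ℕ):ℚ) - 1) + 2 = (N:ℚ) := by
    rw [hNdef]; push_cast; ring
  have hmin : ((min D (N - D) : ℕ) : ℚ) = min ((D:ℕ):ℚ) ((N:ℚ) - ((D:ℕ):ℚ)) := by
    rw [Nat.cast_min, Nat.cast_sub hDn]
  have hK2 : ((K+2:ℕ):ℚ) = (K:ℚ)+2 := by push_cast; ring
  refine ⟨fun h => hxyne (congrArg Fin.val h), Or.inl ⟨?_, ?_⟩⟩
  · rw [hrwn, ← hmin, div_lt_div_iff₀ hKq hNq, hK2]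
    linarith [hq1]
  · rw [hrwn, ← hmin, div_lt_div_iff₀ hNq hKq, hK2]
    linarith [hq2]

/-- Any two vertices of `A_{k,r}` (for `k ≥ 2`, `r ≥ 2`) lie on a common cycle of
length `2k+1`. -/
theorem andrasfai_two_vertices_on_common_cycle (k r : ℕ) (hk : 2 ≤ k) (hr : 2 ≤ r)
    (u v : Fin ((2*k-1)*(r-1)+2)) :
    ∃ (w : (andrasfai k r).Walk u u), w.IsCycle ∧ w.length = 2*k+1 ∧ v ∈ w.support := by
  obtain ⟨K, rfl⟩ : ∃ K, k = K + 2 := ⟨k - 2, by omega⟩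
  obtain ⟨R, rfl⟩ : ∃ R, r = R + 2 := ⟨r - 2, by omega⟩
  clear hk hr
  have hsub1 : 2*(K+2)-1 = 2*K+3 := by omega
  have hsub2 : (R+2)-1 = R+1 := by omega
  have hsub3 : (K+2)-1 = K+1 := by omega
  set N : ℕ := (2*K+3)*(R+1)+2 with hNdef
  have hnred : (2*(K+2)-1)*((R+2)-1)+2 = N := by rw [hNdef, hsub1, hsub2]
  set a : ℕ := (K+1)*(R+1)+1 with hadef
  have hinv : (2*K+3)*a = (K+1)*N + 1 := by rw [hNdef, hadef]; ring
  have htotal : (2*(K+2)+1)*a + R = (K+2)*N := by rw [hNdef, hadef]; ring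
  have hNR : (2*K+3)*R + (2*K+5) = N := by rw [hNdef]; ring
  have ha' : ((K+2)-1)*((R+2)-1)+1 = a := by rw [hsub3, hsub2, hadef]
  have hb' : (K+2)*((R+2)-1)+1 = a + R + 1 := by rw [hsub2, hadef]; ring
  have hmodN : ∀ z : ℕ, z % ((2*(K+2)-1)*((R+2)-1)+2) = z % N := fun z => by rw [hnred]
  clear_value N a
  have hN5 : 2*K+5 ≤ N := by omega
  have huN : u.val < N := by have := u.isLt; omega
  have hvN : v.val < N := by have := v.isLt; omega
  have hNpos : 0 < N := by omega
  -- the congruence helper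
  have hcongr : ∀ X m : ℕ, (X + m*N) % N = X % N := fun X m => Nat.add_mul_mod_self_right X m N
  -- choice of j and e
  obtain ⟨j, e, hj1, hj2, heR, hjed⟩ :
      ∃ j e, 1 ≤ j ∧ j ≤ 2*(K+2) ∧ e ≤ R ∧
        ((u.val + (j*a+e)) % N = v.val ∨ v = u) := by
    set d : ℕ := (N + v.val - u.val) % N with hddef
    have hdN : d < N := Nat.mod_lt _ hNpos
    have hdv : (u.val + d) % N = v.val := by
      rw [hddef, Nat.add_mod_mod, show u.val + (N + v.val - u.val) = v.val + N by omega,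
        Nat.add_mod_right, Nat.mod_eq_of_lt hvN]
    by_cases hd0 : d = 0
    · refine ⟨1, 0, le_refl 1, by omega, by omega, Or.inr ?_⟩
      apply Fin.ext
      rw [← hdv, hd0, Nat.add_zero, Nat.mod_eq_of_lt huN]
    · clear_value d
      set c : ℕ := ((2*K+3)*d) % N with hcdef
      have hcN : c < N := Nat.mod_lt _ hNpos
      have hca : c * a % N = d % N := by
        have h1 : c * a % N = ((2*K+3)*d) * a % N := by
          rw [hcdef, Nat.mod_mul_mod]
        have h2 : (2*K+3)*d*a = d + d*(K+1)*N := by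
          rw [show (2*K+3)*d*a = d*((2*K+3)*a) by ring, hinv]; ring
        rw [h1, h2, hcongr d (d*(K+1))]
      have hc0 : c ≠ 0 := by
        intro hc
        have h1 : N ∣ (2*K+3)*d := Nat.dvd_of_mod_eq_zero (hcdef ▸ hc)
        have h2 : N ∣ ((2*K+3)*d) * a := h1.mul_right a
        have h3 : (2*K+3)*d*a = d + d*(K+1)*N := by
          rw [show (2*K+3)*d*a = d*((2*K+3)*a) by ring, hinv]; ring
        rw [h3] at h2
        have h4 : N ∣ d := (Nat.dvd_add_iff_left ⟨d*(K+1), by ring⟩).mpr h2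
        exact hd0 (Nat.eq_zero_of_dvd_of_lt h4 hdN)
      clear_value c
      by_cases hcsmall : c ≤ 2*(K+2)
      · refine ⟨c, 0, by omega, hcsmall, by omega, Or.inl ?_⟩
        have hh : (u.val + (c*a)) % N = (u.val + d) % N := Nat.ModEq.add_left u.val hca
        exact hh.trans hdv
      · set e0 : ℕ := (c-2)/(2*K+3) with he0def
        set j0 : ℕ := c - e0*(2*K+3) with hj0def
        have hdm : (2*K+3) * e0 + (c-2) % (2*K+3) = c - 2 := by
          rw [he0def]; exact Nat.div_add_mod (c-2) (2*K+3)
        have he0R : e0 ≤ R := by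
          have hcm2 : (R+1) * (2*K+3) = (2*K+3) * (R+1) := Nat.mul_comm _ _
          have h : (c-2)/(2*K+3) < R + 1 := by
            rw [Nat.div_lt_iff_lt_mul (by omega)]
            omega
          rw [he0def]; omega
        clear_value e0 j0
        have hcm : (2*K+3) * e0 = e0 * (2*K+3) := Nat.mul_comm _ _
        have hmlt : (c-2) % (2*K+3) < 2*K+3 := Nat.mod_lt _ (by omega)
        have he0m : e0*(2*K+3) ≤ c - 2 := by omega
        have hj0lb : 2 ≤ j0 := by omega
        have hj0ub : j0 ≤ 2*(K+2) := by omega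
        have hsum : j0 + e0*(2*K+3) = c := by omega
        refine ⟨j0, e0, by omega, hj0ub, he0R, Or.inl ?_⟩
        have hkey : (j0*a + e0) % N = d % N := by
          have h1 : (j0 + e0*(2*K+3))*a = j0*a + e0*((2*K+3)*a) := by ring
          have h2 : c * a = j0*a + e0 + e0*(K+1)*N := by
            rw [← hsum, h1, hinv]; ring
          have := hcongr (j0*a + e0) (e0*(K+1))
          rw [← h2] at this
          rw [← this] -- goal:  c*a % N = d % N
          exact hca
        have hh : (u.val + (j0*a + e0)) % N = (u.val + d) % N := Nat.ModEq.add_left u.val hkey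
        exact hh.trans hdv
  -- the vertex function
  set E : ℕ → ℕ := fun i => (if j ≤ i then e else 0) + (if j+1 ≤ i then R - e else 0)
    with hEdef
  set S : ℕ → ℕ := fun i => i*a + E i with hSdef
  have hElb : ∀ i, E i ≤ R := by
    intro i; simp only [hEdef]; split_ifs <;> omega
  have hEmono : ∀ i1 i2, i1 ≤ i2 → E i1 ≤ E i2 := by
    intro i1 i2 h; simp only [hEdef]; split_ifs <;> omega
  have hEstep : ∀ i, E (i+1) ≤ E i + R := by
    intro i; simp only [hEdef]; split_ifs <;> omega
  set f : ℕ → Fin ((2*(K+2)-1)*((R+2)-1)+2) :=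
    fun i => ⟨(u.val + S i) % N, by
      have := Nat.mod_lt (u.val + S i) hNpos
      omega⟩ with hfdef
  have hfval : ∀ i, (f i).val = (u.val + S i) % N := fun i => rfl
  have hE0 : E 0 = 0 := by simp only [hEdef]; split_ifs <;> omega
  have hS0 : S 0 = 0 := by simp only [hSdef]; rw [hE0]; simp
  have hf0 : f 0 = u := by
    apply Fin.ext
    rw [hfval, hS0, Nat.add_zero, Nat.mod_eq_of_lt huN]
  have hEend : E (2*(K+2)+1) = R := by simp only [hEdef]; split_ifs <;> omega
  have hfend : f (2*(K+2)+1) = u := by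
    apply Fin.ext
    rw [hfval]
    have : S (2*(K+2)+1) = (K+2)*N := by
      simp only [hSdef]; rw [hEend]; exact htotal
    rw [this, hcongr u.val (K+2), Nat.mod_eq_of_lt huN]
  -- adjacency
  have hadj : ∀ i, (andrasfai (K+2) (R+2)).Adj (f i) (f (i+1)) := by
    intro i
    have hia : (i+1)*a = i*a + a := by ring
    have hstep1 : S i + a ≤ S (i+1) := by
      have := hEmono i (i+1) (by omega)
      simp only [hSdef]
      omega
    have hstep2 : S (i+1) ≤ S i + a + R := by
      have := hEstep i
      simp only [hSdef]
      omega
    apply andrasfai_adj_of_step K R (f i) (f (i+1)) (S (i+1) - S i)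
    · omega
    · omega
    · rw [hmodN, hfval, hfval, Nat.mod_add_mod]
      congr 1
      omega
  -- injectivity on [0, 2K+4]
  have key : ∀ i1 i2, i1 < i2 → i2 ≤ 2*(K+2) → f i1 ≠ f i2 := by
    intro i1 i2 hlt hub hfe
    obtain ⟨T, hT⟩ : ∃ T, i2 = i1 + T ∧ 1 ≤ T ∧ T ≤ 2*(K+2) := ⟨i2 - i1, by omega⟩
    obtain ⟨hTeq, hT1, hT2⟩ := hT
    subst hTeq
    have hmod : (u.val + S i1) % N = (u.val + S (i1+T)) % N := by
      rw [← hfval, ← hfval, hfe]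
    have hmul : (i1+T)*a = i1*a + T*a := by ring
    have hEm : E i1 ≤ E (i1+T) := hEmono _ _ (by omega)
    have hSle : S i1 ≤ S (i1+T) := by simp only [hSdef]; omega
    set δ : ℕ := E (i1+T) - E i1 with hδdef
    have hδR : δ ≤ R := by have := hElb (i1+T); omega
    have hX : S (i1+T) - S i1 = T*a + δ := by
      simp only [hSdef, hδdef]; omega
    have hdvd : N ∣ S (i1+T) - S i1 := by
      have h1 : S i1 % N = S (i1+T) % N :=
        Nat.ModEq.add_left_cancel' u.val hmod
      exact (Nat.modEq_iff_dvd' hSle).mp h1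
    rw [hX] at hdvd
    have h5 : N ∣ (2*K+3)*(T*a + δ) := hdvd.mul_left _
    have h6 : (2*K+3)*(T*a + δ) = T*(K+1)*N + (T + (2*K+3)*δ) := by
      rw [Nat.mul_add, show (2*K+3)*(T*a) = T*((2*K+3)*a) by ring, hinv]; ring
    rw [h6] at h5
    have h7 : N ∣ T + (2*K+3)*δ :=
      (Nat.dvd_add_right ⟨T*(K+1), by ring⟩).mp h5
    have h8 : (2*K+3)*δ ≤ (2*K+3)*R := Nat.mul_le_mul_left _ hδR
    have h9 : T + (2*K+3)*δ < N := by omega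
    have h10 : 0 < T + (2*K+3)*δ := by omega
    exact absurd (Nat.le_of_dvd h10 h7) (by omega)
  have hinj : ∀ i1 i2, i1 ≤ 2*(K+2) → i2 ≤ 2*(K+2) → f i1 = f i2 → i1 = i2 := by
    intro i1 i2 h1 h2 hfe
    by_contra hne
    rcases Nat.lt_or_ge i1 i2 with h | h
    · exact key i1 i2 h h2 hfe
    · exact key i2 i1 (by omega) h1 hfe.symm
  have hf_end0 : f (2*(K+2)+1) = f 0 := by rw [hfend, hf0]
  refine ⟨(chainWalk f hadj 0 (2*(K+2)+1)).copy hf0 (by rw [Nat.zero_add]; exact hfend),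
    ?_, ?_, ?_⟩
  · rw [SimpleGraph.Walk.isCycle_def]
    refine ⟨?_, ?_, ?_⟩
    · rw [SimpleGraph.Walk.isTrail_def, Walk.edges_copy, chainWalk_edges]
      refine List.Nodup.map_on ?_ List.nodup_range
      intro t1 ht1 t2 ht2 heq
      rw [List.mem_range] at ht1 ht2
      simp only [Nat.zero_add] at heq
      rcases Sym2.eq_iff.mp heq with ⟨hA, hB⟩ | ⟨hA, hB⟩
      · exact hinj t1 t2 (by omega) (by omega) hA
      · by_cases h2 : t2 + 1 ≤ 2*(K+2)
        · have e1 : t1 = t2+1 := hinj t1 (t2+1) (by omega) h2 hA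
          by_cases h3 : t1 + 1 ≤ 2*(K+2)
          · have e2 : t1+1 = t2 := hinj (t1+1) t2 h3 (by omega) hB
            omega
          · have hfe : f (t1+1) = f 0 := by rw [show t1+1 = 2*(K+2)+1 by omega, hf_end0]
            have e2 : 0 = t2 := hinj 0 t2 (by omega) (by omega) (hfe.symm.trans hB)
            omega
        · have hfe : f (t2+1) = f 0 := by rw [show t2+1 = 2*(K+2)+1 by omega, hf_end0]
          have e1 : t1 = 0 := hinj t1 0 (by omega) (by omega) (hA.trans hfe)
          have e2 : t1+1 = t2 := hinj (t1+1) t2 (by omega) (by omega) hB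
          omega
    · intro hnil
      have hlen := congrArg SimpleGraph.Walk.length hnil
      rw [Walk.length_copy, chainWalk_length] at hlen
      simp at hlen
    · rw [Walk.support_copy, chainWalk_support, List.range_succ_eq_map]
      simp only [List.map_cons, List.tail_cons, List.map_map]
      refine List.Nodup.map_on ?_ List.nodup_range
      intro t1 ht1 t2 ht2 heq
      rw [List.mem_range] at ht1 ht2
      simp only [Function.comp_apply, Nat.zero_add, Nat.succ_eq_add_one] at heq
      by_cases h1 : t1 + 1 ≤ 2*(K+2)
      · by_cases h2 : t2 + 1 ≤ 2*(K+2)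
        · have := hinj (t1+1) (t2+1) h1 h2 heq
          omega
        · have hfe : f (t2+1) = f 0 := by rw [show t2+1 = 2*(K+2)+1 by omega, hf_end0]
          have := hinj (t1+1) 0 h1 (by omega) (heq.trans hfe)
          omega
      · by_cases h2 : t2 + 1 ≤ 2*(K+2)
        · have hfe : f (t1+1) = f 0 := by rw [show t1+1 = 2*(K+2)+1 by omega, hf_end0]
          have := hinj 0 (t2+1) (by omega) h2 (hfe.symm.trans heq)
          omega
        · omega
  · rw [Walk.length_copy, chainWalk_length]
  · rw [Walk.support_copy, chainWalk_support]
    rcases hjed with hje | hvu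
    · refine List.mem_map.mpr ⟨j, List.mem_range.mpr (by omega), ?_⟩
      apply Fin.ext
      have hEj : E j = e := by simp only [hEdef]; split_ifs <;> omega
      have hSj : S j = j*a + e := by simp only [hSdef]; rw [hEj]
      rw [Nat.zero_add, hfval, hSj]
      exact hje
    · rw [hvu]
      exact List.mem_map.mpr ⟨0, List.mem_range.mpr (by omega), by simpa using hf0⟩
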